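/- Let x be a random vector in ℝ^d whose law is the standard Gaussian measure γ_d, and let c > 0. Let b = √(1 + 2√c + 2c). Then P(‖x‖ ≥ b√d) ≤ exp(−c·d). Moreover, if additionally 2√c < 1 and b' = √(1 − 2√c), then P(‖x‖ ≤ b'√d) ≤ exp(−c·d). -/

import Mathlib

open MeasureTheory ProbabilityTheory Real
open scoped ENNReal NNReal

/-- The standard Gaussian measure on `ℝ^d`: the law of a vector with `d` independent
standard normal coordinates. -/
noncomputable def stdGaussian (d : ℕ) : Measure (EuclideanSpace ℝ (Fin d)) :=
  Measure.map (MeasurableEquiv.toLp 2 (Fin d → ℝ)) (Measure.pi fun _ => gaussianReal 0 1)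

instance stdGaussian.instIsProbabilityMeasure (d : ℕ) : IsProbabilityMeasure (stdGaussian d) :=
  Measure.isProbabilityMeasure_map (MeasurableEquiv.toLp 2 (Fin d → ℝ)).measurable.aemeasurable

namespace GaussAux

theorem my_integral_pi {n : ℕ} {μ : Measure ℝ} [IsProbabilityMeasure μ] (f : ℝ → ℝ) :
    ∫ x : Fin n → ℝ, ∏ i, f (x i) ∂(Measure.pi fun _ => μ) = (∫ x, f x ∂μ) ^ n := by
  induction n with
  | zero => simp
  | succ n n_ih =>
      calc
        _ = ∫ x : ℝ × (Fin n → ℝ), f x.1 * ∏ i : Fin n, f (x.2 i)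
            ∂(μ.prod (Measure.pi fun _ => μ)) := by
          rw [← ((measurePreserving_piFinSuccAbove
            (fun _ : Fin (n+1) => μ) 0).symm).integral_comp']
          congr 1
          ext x
          rw [Fin.prod_univ_succ]
          congr 1
        _ = (∫ x, f x ∂μ) * (∫ x, f x ∂μ) ^ n := by rw [← n_ih, ← integral_prod_mul]
        _ = _ := by ring

theorem my_integrable_pi {n : ℕ} {μ : Measure ℝ} [IsProbabilityMeasure μ] {f : ℝ → ℝ}
    (hf : Integrable f μ) :
    Integrable (fun x : Fin n → ℝ => ∏ i, f (x i)) (Measure.pi fun _ => μ) := by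
  induction n with
  | zero =>
      simp only [Finset.univ_eq_empty, Finset.prod_empty]
      exact integrable_const _
  | succ n n_ih =>
      have h := ((measurePreserving_piFinSuccAbove (fun _ : Fin (n+1) => μ) 0).symm)
      rw [← h.integrable_comp_emb (MeasurableEquiv.measurableEmbedding _)]
      have heq : (fun x : Fin (n+1) → ℝ => ∏ i, f (x i)) ∘
          (MeasurableEquiv.piFinSuccAbove (fun _ => ℝ) 0).symm
          = fun x : ℝ × (Fin n → ℝ) => f x.1 * ∏ i : Fin n, f (x.2 i) := by
        ext x
        simp only [Function.comp_apply]
        rw [Fin.prod_univ_succ]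
        congr 1
      rw [heq]
      exact Integrable.mul_prod hf n_ih

lemma pdf_eq : gaussianPDF 0 1 = fun x => ((gaussianPDFReal 0 1 x).toNNReal : ℝ≥0∞) := rfl

lemma gauss_transfer (g : ℝ → ℝ) :
    ∫ x, g x ∂(gaussianReal 0 1) = ∫ x, gaussianPDFReal 0 1 x * g x := by
  rw [gaussianReal_of_var_ne_zero 0 one_ne_zero]
  rw [pdf_eq, integral_withDensity_eq_integral_smul
    (by exact measurable_real_toNNReal.comp (measurable_gaussianPDFReal 0 1))]
  congr 1
  ext x
  simp [NNReal.smul_def, Real.coe_toNNReal _ (gaussianPDFReal_nonneg 0 1 x)]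

lemma pdf_mul (t x : ℝ) :
    gaussianPDFReal 0 1 x * rexp (t * x ^ 2) = (√(2*π))⁻¹ * rexp (-(1/2 - t) * x ^ 2) := by
  simp only [gaussianPDFReal, NNReal.coe_one, mul_one, sub_zero]
  rw [mul_assoc, ← Real.exp_add]
  congr 2
  ring

lemma integrable_exp_sq_gauss {t : ℝ} (ht : t < 1/2) :
    Integrable (fun x => rexp (t * x ^ 2)) (gaussianReal 0 1) := by
  rw [gaussianReal_of_var_ne_zero 0 one_ne_zero]
  rw [pdf_eq, integrable_withDensity_iff_integrable_smul
    (by exact measurable_real_toNNReal.comp (measurable_gaussianPDFReal 0 1))]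
  have heq : (fun x => ((gaussianPDFReal 0 1 x).toNNReal : ℝ≥0) • rexp (t * x ^ 2))
      = fun x => (√(2*π))⁻¹ * rexp (-(1/2 - t) * x ^ 2) := by
    ext x
    rw [NNReal.smul_def, smul_eq_mul, Real.coe_toNNReal _ (gaussianPDFReal_nonneg 0 1 x),
      pdf_mul]
  rw [heq]
  exact (integrable_exp_neg_mul_sq (by linarith)).const_mul _

lemma integral_exp_sq_gauss {t : ℝ} (ht : t < 1/2) :
    ∫ x, rexp (t * x ^ 2) ∂(gaussianReal 0 1) = (√(1 - 2*t))⁻¹ := by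
  rw [gauss_transfer]
  simp_rw [pdf_mul]
  rw [integral_const_mul, integral_gaussian]
  have h2 : (0:ℝ) < 1/2 - t := by linarith
  rw [← Real.sqrt_inv, ← Real.sqrt_inv, ← Real.sqrt_mul (by positivity)]
  congr 1
  have hπ := Real.pi_pos
  have h3 : (0:ℝ) < 1 - 2*t := by linarith
  field_simp

lemma normsq_eq {d : ℕ} (x : EuclideanSpace ℝ (Fin d)) : ‖x‖^2 = ∑ i, (x i)^2 := by
  rw [EuclideanSpace.norm_eq, Real.sq_sqrt (by positivity)]
  simp [sq_abs]

lemma exp_normsq_eq {d : ℕ} (t : ℝ) :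
    (fun x : EuclideanSpace ℝ (Fin d) => rexp (t * ‖x‖^2))
      = fun x => ∏ i, rexp (t * (x i)^2) := by
  funext x
  rw [normsq_eq, Finset.mul_sum, Real.exp_sum]

lemma mgf_normsq (d : ℕ) {t : ℝ} (ht : t < 1/2) :
    mgf (fun x : EuclideanSpace ℝ (Fin d) => ‖x‖^2) (stdGaussian d) t
      = ((√(1 - 2*t))⁻¹)^d := by
  have h0 : mgf (fun x : EuclideanSpace ℝ (Fin d) => ‖x‖^2) (stdGaussian d) t
      = ∫ x, rexp (t * ‖x‖^2) ∂(stdGaussian d) := rfl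
  rw [h0, exp_normsq_eq]
  rw [show (∫ x : EuclideanSpace ℝ (Fin d), ∏ i, rexp (t * (x i)^2) ∂(stdGaussian d))
      = ∫ x : Fin d → ℝ, ∏ i, rexp (t * (x i)^2)
        ∂(Measure.pi fun _ => gaussianReal 0 1) from
        integral_map_equiv (MeasurableEquiv.toLp 2 (Fin d → ℝ)) _,
    my_integral_pi (fun y => rexp (t * y^2)), integral_exp_sq_gauss ht]

lemma integrable_exp_normsq (d : ℕ) {t : ℝ} (ht : t < 1/2) :
    Integrable (fun x : EuclideanSpace ℝ (Fin d) => rexp (t * ‖x‖^2)) (stdGaussian d) := by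
  rw [exp_normsq_eq]
  exact (integrable_map_equiv (MeasurableEquiv.toLp 2 (Fin d → ℝ)) _).mpr
    (my_integrable_pi (integrable_exp_sq_gauss ht))

lemma exp_quad_le {u : ℝ} (h0 : 0 ≤ u) (h1 : u ≤ 1) : rexp (u - u^2/2) ≤ 1 + u := by
  have hb := Real.exp_bound' h0 h1 (n := 3) (by norm_num)
  norm_num [Finset.sum_range_succ, Nat.factorial] at hb
  have h3 : 1 + u^2/2 ≤ rexp (u^2/2) := by
    have := Real.add_one_le_exp (u^2/2); linarith
  have h4 : rexp u ≤ (1+u) * rexp (u^2/2) := by nlinarith [Real.exp_pos (u^2/2)]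
  rw [Real.exp_sub, div_le_iff₀ (Real.exp_pos _)]
  exact h4

end GaussAux

open GaussAux

/-- **Concentration of the length of a spherical Gaussian** (reparametrized
Laurent–Massart bounds).  Let `x` have law the standard Gaussian measure `γ_d` on `ℝ^d`
and let `c > 0`.  With `b = √(1 + 2√c + 2c)` one has
`P(‖x‖ ≥ b √d) ≤ exp (-c d)`; moreover if `2√c < 1` and `b' = √(1 - 2√c)` then
`P(‖x‖ ≤ b' √d) ≤ exp (-c d)`. -/
theorem gaussian_norm_concentration (d : ℕ) (hd : 0 < d) (c : ℝ) (hc : 0 < c) :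
    stdGaussian d
        {x | Real.sqrt (1 + 2 * Real.sqrt c + 2 * c) * Real.sqrt d ≤ ‖x‖}
      ≤ ENNReal.ofReal (Real.exp (-(c * d))) ∧
    (2 * Real.sqrt c < 1 →
      stdGaussian d {x | ‖x‖ ≤ Real.sqrt (1 - 2 * Real.sqrt c) * Real.sqrt d}
        ≤ ENNReal.ofReal (Real.exp (-(c * d)))) := by
  have hs : 0 < Real.sqrt c := Real.sqrt_pos.mpr hc
  set s : ℝ := Real.sqrt c with hs_def
  have hsc : s^2 = c := Real.sq_sqrt hc.le
  constructor
  · -- upper tail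
    set B : ℝ := 1 + 2*s + 2*c with hB_def
    have hB0 : 0 < B := by nlinarith
    set t : ℝ := (s + c)/B with ht_def
    have ht0 : 0 ≤ t := by positivity
    have htlt : t < 1/2 := by
      rw [ht_def, div_lt_iff₀ hB0]; nlinarith
    have h1mt : 1 - 2*t = B⁻¹ := by
      rw [ht_def]; field_simp; ring
    have hch := measure_ge_le_exp_mul_mgf (μ := stdGaussian d)
      (X := fun x : EuclideanSpace ℝ (Fin d) => ‖x‖^2) (B * d) ht0
      (integrable_exp_normsq d htlt)
    rw [mgf_normsq d htlt, h1mt, Real.sqrt_inv, inv_inv] at hch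
    have hsub : {x : EuclideanSpace ℝ (Fin d) | √B * √(d:ℝ) ≤ ‖x‖}
        ⊆ {x : EuclideanSpace ℝ (Fin d) | B * (d:ℝ) ≤ ‖x‖^2} := by
      intro x hx
      have h1 : (√B * √(d:ℝ))^2 ≤ ‖x‖^2 := pow_le_pow_left₀ (by positivity) hx 2
      rwa [mul_pow, Real.sq_sqrt hB0.le, Real.sq_sqrt (Nat.cast_nonneg d)] at h1
    have hreal : rexp (-t * (B * d)) * (√B)^d ≤ rexp (-(c * d)) := by
      have htB : t * B = s + c := by
        rw [ht_def]; field_simp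
      have hBexp : B ≤ rexp (2*s) := by
        have hq := Real.quadratic_le_exp_of_nonneg (by positivity : (0:ℝ) ≤ 2*s)
        nlinarith
      have hsqrt : √B ≤ rexp s := by
        have h2 : √B ≤ √(rexp (2*s)) := Real.sqrt_le_sqrt hBexp
        rwa [show rexp (2*s) = rexp s * rexp s by rw [← Real.exp_add]; ring_nf,
          Real.sqrt_mul_self (Real.exp_pos s).le] at h2
      have hpow : (√B)^d ≤ rexp ((d:ℝ) * s) := by
        rw [Real.exp_nat_mul]
        exact pow_le_pow_left₀ (Real.sqrt_nonneg B) hsqrt d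
      calc rexp (-t * (B * d)) * (√B)^d
          ≤ rexp (-t * (B * d)) * rexp ((d:ℝ) * s) :=
            mul_le_mul_of_nonneg_left hpow (Real.exp_pos _).le
        _ = rexp (-t * (B * d) + (d:ℝ) * s) := by rw [← Real.exp_add]
        _ ≤ rexp (-(c * d)) := by
            apply Real.exp_le_exp.mpr
            have : -t * (B * (d:ℝ)) = -((s + c) * d) := by
              rw [neg_mul, ← mul_assoc, htB]
            rw [this]
            nlinarith [(Nat.cast_nonneg d : (0:ℝ) ≤ d)]
    calc stdGaussian d {x | √B * √(d:ℝ) ≤ ‖x‖}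
        ≤ stdGaussian d {x : EuclideanSpace ℝ (Fin d) | B * (d:ℝ) ≤ ‖x‖^2} :=
          measure_mono hsub
      _ = ENNReal.ofReal
            ((stdGaussian d {x : EuclideanSpace ℝ (Fin d) | B * (d:ℝ) ≤ ‖x‖^2}).toReal) :=
          (ENNReal.ofReal_toReal (measure_ne_top _ _)).symm
      _ ≤ ENNReal.ofReal (rexp (-(c * d))) :=
          ENNReal.ofReal_le_ofReal (hch.trans hreal)
  · -- lower tail
    intro h2s
    have h2s' : 2*s < 1 := by rw [two_mul]; linarith [h2s, two_mul s]
    have htle : -s ≤ 0 := by linarith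
    have htlt : -s < 1/2 := by linarith
    have hch := measure_le_le_exp_mul_mgf (μ := stdGaussian d)
      (X := fun x : EuclideanSpace ℝ (Fin d) => ‖x‖^2) ((1 - 2*s) * d) htle
      (integrable_exp_normsq d htlt)
    rw [mgf_normsq d htlt, show (1:ℝ) - 2*(-s) = 1 + 2*s by ring] at hch
    have h12s : (0:ℝ) ≤ 1 - 2*s := by linarith
    have hsub : {x : EuclideanSpace ℝ (Fin d) | ‖x‖ ≤ √(1 - 2*s) * √(d:ℝ)}
        ⊆ {x : EuclideanSpace ℝ (Fin d) | ‖x‖^2 ≤ (1 - 2*s) * (d:ℝ)} := by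
      intro x hx
      have h1 : ‖x‖^2 ≤ (√(1 - 2*s) * √(d:ℝ))^2 := pow_le_pow_left₀ (norm_nonneg x) hx 2
      rwa [mul_pow, Real.sq_sqrt h12s, Real.sq_sqrt (Nat.cast_nonneg d)] at h1
    have hkey : rexp (s - s^2) ≤ √(1 + 2*s) := by
      have h2 : rexp (s - s^2) ^ 2 = rexp (2*s - (2*s)^2/2) := by
        rw [sq, ← Real.exp_add]; congr 1; ring
      have h3 : rexp (2*s - (2*s)^2/2) ≤ 1 + 2*s :=
        exp_quad_le (by positivity) h2s'.le
      have h4 : rexp (s - s^2) ^ 2 ≤ 1 + 2*s := h2 ▸ h3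
      have h5 := Real.sqrt_le_sqrt h4
      rwa [Real.sqrt_sq (Real.exp_pos _).le] at h5
    have hreal : rexp (-(-s) * ((1 - 2*s) * d)) * ((√(1 + 2*s))⁻¹)^d
        ≤ rexp (-(c * d)) := by
      have hinv : ((√(1 + 2*s))⁻¹)^d ≤ ((rexp (s - s^2))⁻¹)^d := by
        apply pow_le_pow_left₀ (by positivity)
        exact inv_anti₀ (Real.exp_pos _) hkey
      have hexp : ((rexp (s - s^2))⁻¹)^d = rexp ((d:ℝ) * (-(s - s^2))) := by
        rw [← Real.exp_neg, Real.exp_nat_mul]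
      calc rexp (-(-s) * ((1 - 2*s) * d)) * ((√(1 + 2*s))⁻¹)^d
          ≤ rexp (-(-s) * ((1 - 2*s) * d)) * rexp ((d:ℝ) * (-(s - s^2))) := by
            rw [← hexp]
            exact mul_le_mul_of_nonneg_left hinv (Real.exp_pos _).le
        _ = rexp (-(-s) * ((1 - 2*s) * d) + (d:ℝ) * (-(s - s^2))) := by
            rw [← Real.exp_add]
        _ ≤ rexp (-(c * d)) := by
            apply Real.exp_le_exp.mpr
            have : -(-s) * ((1 - 2*s) * (d:ℝ)) + (d:ℝ) * (-(s - s^2)) = -(s^2 * d) := by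
              ring
            rw [this, hsc]
    calc stdGaussian d {x | ‖x‖ ≤ √(1 - 2*s) * √(d:ℝ)}
        ≤ stdGaussian d {x : EuclideanSpace ℝ (Fin d) | ‖x‖^2 ≤ (1 - 2*s) * (d:ℝ)} :=
          measure_mono hsub
      _ = ENNReal.ofReal
            ((stdGaussian d
              {x : EuclideanSpace ℝ (Fin d) | ‖x‖^2 ≤ (1 - 2*s) * (d:ℝ)}).toReal) :=
          (ENNReal.ofReal_toReal (measure_ne_top _ _)).symm
      _ ≤ ENNReal.ofReal (rexp (-(c * d))) :=
          ENNReal.ofReal_le_ofReal (hch.trans hreal)
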